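/- The function y = K₀⁴ satisfies the fifth-order equation t⁴y⁽⁵⁾ + 10t³y⁽⁴⁾ - (20t⁴-25t²)y⁽³⁾ - (120t³-15t)y'' + (64t⁴-152t²+1)y' + (128t³-32t)y = 0 on (0,∞). -/

import Mathlib

open MeasureTheory

noncomputable def K₀ (t : ℝ) : ℝ := ∫ x in Set.Ioi (0:ℝ), Real.exp (-t * Real.cosh x)

noncomputable def y : ℝ → ℝ := fun t => (K₀ t) ^ 4

open Real Set Filter Metric

/-- Auxiliary family of integrals: `Fi n t = ∫₀^∞ cosh(x)^n e^{-t cosh x} dx`. -/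
noncomputable def Fi (n : ℕ) (t : ℝ) : ℝ :=
  ∫ x in Set.Ioi (0:ℝ), (Real.cosh x) ^ n * Real.exp (-t * Real.cosh x)

lemma self_le_cosh {x : ℝ} (hx : 0 ≤ x) : x ≤ Real.cosh x := by
  have h1 : x ≤ Real.sinh x := by rwa [Real.self_le_sinh_iff]
  exact h1.trans (Real.sinh_lt_cosh x).le

lemma pow_cosh_mul_exp_le {n : ℕ} {t x : ℝ} (ht : 0 < t) (hx : 0 ≤ x) :
    (Real.cosh x) ^ n * Real.exp (-t * Real.cosh x)
      ≤ (n.factorial * (2/t) ^ n) * Real.exp (-(t/2) * x) := by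
  have hc : (0:ℝ) ≤ Real.cosh x := (Real.cosh_pos x).le
  have h1 : ((t/2) * Real.cosh x) ^ n / n.factorial ≤ Real.exp ((t/2) * Real.cosh x) :=
    Real.pow_div_factorial_le_exp _ (by positivity) n
  have h2 : (Real.cosh x) ^ n ≤ n.factorial * (2/t) ^ n * Real.exp ((t/2) * Real.cosh x) := by
    have := (div_le_iff₀ (by positivity : (0:ℝ) < (n.factorial : ℝ))).mp h1
    have hne : (t/2) ^ n ≠ 0 := by positivity
    calc (Real.cosh x) ^ n
        = (((t/2) * Real.cosh x) ^ n) * ((2/t) ^ n) := by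
          rw [mul_pow]; field_simp
          rw [← mul_pow, div_mul_div_comm, mul_comm t 2, div_self (by positivity), one_pow]
      _ ≤ (Real.exp ((t/2) * Real.cosh x) * n.factorial) * ((2/t) ^ n) := by
          apply mul_le_mul_of_nonneg_right this (by positivity)
      _ = n.factorial * (2/t) ^ n * Real.exp ((t/2) * Real.cosh x) := by ring
  calc (Real.cosh x) ^ n * Real.exp (-t * Real.cosh x)
      ≤ (n.factorial * (2/t) ^ n * Real.exp ((t/2) * Real.cosh x)) * Real.exp (-t * Real.cosh x) :=
        mul_le_mul_of_nonneg_right h2 (Real.exp_pos _).le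
    _ = (n.factorial * (2/t) ^ n) * Real.exp (-(t/2) * Real.cosh x) := by
        rw [mul_assoc, ← Real.exp_add]; ring_nf
    _ ≤ (n.factorial * (2/t) ^ n) * Real.exp (-(t/2) * x) := by
        apply mul_le_mul_of_nonneg_left _ (by positivity)
        apply Real.exp_le_exp.mpr
        have := self_le_cosh hx
        nlinarith

lemma integrableOn_Fi (n : ℕ) {t : ℝ} (ht : 0 < t) :
    IntegrableOn (fun x => (Real.cosh x) ^ n * Real.exp (-t * Real.cosh x)) (Set.Ioi 0) := by
  have hcont : Continuous (fun x => (Real.cosh x) ^ n * Real.exp (-t * Real.cosh x)) := by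
    continuity
  refine Integrable.mono' (g := fun x => (n.factorial * (2/t) ^ n) * Real.exp (-(t/2) * x)) ?_
    hcont.aestronglyMeasurable.restrict ?_
  · exact (exp_neg_integrableOn_Ioi 0 (by positivity)).const_mul _
  · rw [ae_restrict_iff' measurableSet_Ioi]
    filter_upwards with x hx
    rw [Real.norm_eq_abs, abs_of_nonneg (by positivity)]
    exact pow_cosh_mul_exp_le ht hx.le

lemma hasDerivAt_Fi (n : ℕ) {t : ℝ} (ht : 0 < t) :
    HasDerivAt (Fi n) (-(Fi (n+1) t)) t := by
  have h2 : (0:ℝ) < t/2 := by positivity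
  have key := hasDerivAt_integral_of_dominated_loc_of_deriv_le
    (F := fun s x => (Real.cosh x) ^ n * Real.exp (-s * Real.cosh x))
    (F' := fun s x => -((Real.cosh x) ^ (n+1) * Real.exp (-s * Real.cosh x)))
    (μ := volume.restrict (Set.Ioi 0)) (x₀ := t)
    (bound := fun x => (Real.cosh x) ^ (n+1) * Real.exp (-(t/2) * Real.cosh x))
    (s := ball t (t/2)) (ball_mem_nhds t h2) ?_ ?_ ?_ ?_ ?_ ?_
  · have : (∫ x in Set.Ioi (0:ℝ), -((Real.cosh x) ^ (n+1) * Real.exp (-t * Real.cosh x)))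
        = -(Fi (n+1) t) := by
      rw [integral_neg]; rfl
    rw [← this]
    exact key.2
  · filter_upwards with s
    exact (by continuity : Continuous
      (fun x => (Real.cosh x) ^ n * Real.exp (-s * Real.cosh x))).aestronglyMeasurable.restrict
  · exact integrableOn_Fi n ht
  · exact (by continuity : Continuous
      (fun x => -((Real.cosh x) ^ (n+1) * Real.exp (-t * Real.cosh x)))).aestronglyMeasurable.restrict
  · filter_upwards with x s hs
    have hs' : t/2 < s := by
      have := abs_lt.mp (mem_ball_iff_norm.mp hs)
      linarith [this.1]
    rw [norm_neg, Real.norm_eq_abs, abs_of_nonneg (by positivity)]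
    apply mul_le_mul_of_nonneg_left _ (by positivity)
    apply Real.exp_le_exp.mpr
    have hc := Real.one_le_cosh x
    nlinarith
  · exact integrableOn_Fi (n+1) (by positivity)
  · filter_upwards with x s _
    have h : HasDerivAt (fun s : ℝ => Real.exp (-s * Real.cosh x))
        (-Real.cosh x * Real.exp (-s * Real.cosh x)) s := by
      have h1 : HasDerivAt (fun s : ℝ => -s * Real.cosh x) (-Real.cosh x) s := by
        simpa using (hasDerivAt_id s).neg.mul_const (Real.cosh x)
      simpa [mul_comm] using h1.exp
    have := h.const_mul ((Real.cosh x) ^ n)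
    refine this.congr_deriv ?_
    ring

lemma Fi_bessel {t : ℝ} (ht : 0 < t) :
    t^2 * Fi 2 t - t * Fi 1 t - t^2 * Fi 0 t = 0 := by
  -- boundary-term computation: ∫₀^∞ d/dx [-t sinh x e^{-t cosh x}] dx = 0
  set f : ℝ → ℝ := fun x => -t * Real.sinh x * Real.exp (-t * Real.cosh x) with hf
  set f' : ℝ → ℝ := fun x => t^2 * ((Real.cosh x)^2 * Real.exp (-t * Real.cosh x))
      - t^2 * ((Real.cosh x)^0 * Real.exp (-t * Real.cosh x))
      - t * ((Real.cosh x)^1 * Real.exp (-t * Real.cosh x)) with hf'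
  have hderiv : ∀ x ∈ Set.Ioi (0:ℝ), HasDerivAt f (f' x) x := by
    intro x _
    have hexp : HasDerivAt (fun x : ℝ => Real.exp (-t * Real.cosh x))
        (-t * Real.sinh x * Real.exp (-t * Real.cosh x)) x := by
      have h1 : HasDerivAt (fun x : ℝ => -t * Real.cosh x) (-t * Real.sinh x) x :=
        (Real.hasDerivAt_cosh x).const_mul (-t)
      simpa [mul_comm] using h1.exp
    have hs : HasDerivAt (fun x : ℝ => -t * Real.sinh x) (-t * Real.cosh x) x :=
      (Real.hasDerivAt_sinh x).const_mul (-t)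
    have := hs.mul hexp
    refine this.congr_deriv (Eq.symm ?_)
    have hsq := Real.sinh_sq x
    simp only [hf']
    linear_combination (-(t^2 * Real.exp (-t * Real.cosh x))) * hsq
  have hcont : ContinuousWithinAt f (Set.Ici 0) 0 := by
    apply Continuous.continuousWithinAt; continuity
  have hint : IntegrableOn f' (Set.Ioi 0) := by
    exact (((integrableOn_Fi 2 ht).const_mul (t^2)).sub
      ((integrableOn_Fi 0 ht).const_mul (t^2))).sub ((integrableOn_Fi 1 ht).const_mul t)
  have htend : Tendsto f atTop (nhds 0) := by
    apply squeeze_zero_norm' (a := fun x => (2:ℝ) * Real.exp (-(t/2) * x))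
    · filter_upwards [eventually_ge_atTop (0:ℝ)] with x hx
      have hsinh : |Real.sinh x| = Real.sinh x := abs_of_nonneg (by
        rwa [Real.sinh_nonneg_iff])
      have hb := pow_cosh_mul_exp_le (n := 1) ht hx
      simp only [pow_one, Nat.factorial_one, Nat.cast_one, one_mul] at hb
      have hsc : Real.sinh x ≤ Real.cosh x := (Real.sinh_lt_cosh x).le
      have hexp := (Real.exp_pos (-t * Real.cosh x)).le
      calc ‖f x‖ = t * (|Real.sinh x| * Real.exp (-t * Real.cosh x)) := by
            simp [hf, abs_mul, abs_of_pos ht, abs_of_nonneg (Real.exp_pos _).le, mul_assoc]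
        _ ≤ t * (Real.cosh x * Real.exp (-t * Real.cosh x)) := by
            rw [hsinh]
            exact mul_le_mul_of_nonneg_left
              (mul_le_mul_of_nonneg_right hsc hexp) ht.le
        _ ≤ t * ((2/t) * Real.exp (-(t/2) * x)) :=
            mul_le_mul_of_nonneg_left hb ht.le
        _ = 2 * Real.exp (-(t/2) * x) := by field_simp
    · have h1 : Tendsto (fun x : ℝ => Real.exp (-(t/2) * x)) atTop (nhds 0) := by
        have := Real.tendsto_exp_neg_atTop_nhds_zero.comp
          (tendsto_id.const_mul_atTop (by positivity : (0:ℝ) < t/2))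
        apply this.congr
        intro x; simp [Function.comp, neg_mul]
      simpa using h1.const_mul (2:ℝ)
  have := integral_Ioi_of_hasDerivAt_of_tendsto hcont hderiv hint htend
  have hf0 : f 0 = 0 := by simp [hf]
  rw [hf0, sub_zero] at this
  have i2 : IntegrableOn (fun x => t^2 * ((Real.cosh x)^2 * Real.exp (-t * Real.cosh x)))
      (Set.Ioi 0) := (integrableOn_Fi 2 ht).const_mul (t^2)
  have i0 : IntegrableOn (fun x => t^2 * ((Real.cosh x)^0 * Real.exp (-t * Real.cosh x)))
      (Set.Ioi 0) := (integrableOn_Fi 0 ht).const_mul (t^2)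
  have i1 : IntegrableOn (fun x => t * ((Real.cosh x)^1 * Real.exp (-t * Real.cosh x)))
      (Set.Ioi 0) := (integrableOn_Fi 1 ht).const_mul t
  have iA : IntegrableOn (fun x => t^2 * ((Real.cosh x)^2 * Real.exp (-t * Real.cosh x))
      - t^2 * ((Real.cosh x)^0 * Real.exp (-t * Real.cosh x))) (Set.Ioi 0) := i2.sub i0
  have hsplit : (∫ x in Set.Ioi (0:ℝ), f' x)
      = t^2 * Fi 2 t - t^2 * Fi 0 t - t * Fi 1 t := by
    simp only [hf']
    rw [integral_sub iA i1, integral_sub i2 i0,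
      integral_const_mul, integral_const_mul, integral_const_mul]
    rfl
  rw [hsplit] at this
  linarith

lemma hasDerivAt_Fi0 {t : ℝ} (ht : t ∈ Set.Ioi (0:ℝ)) :
    HasDerivAt (Fi 0) (-(Fi 1 t)) t := hasDerivAt_Fi 0 ht

lemma hasDerivAt_Fi1 {t : ℝ} (ht : t ∈ Set.Ioi (0:ℝ)) :
    HasDerivAt (Fi 1) (-(Fi 0 t + Fi 1 t / t)) t := by
  have ht' : (0:ℝ) < t := ht
  have h := hasDerivAt_Fi 1 ht'
  have hb := Fi_bessel ht'
  have : Fi 2 t = Fi 0 t + Fi 1 t / t := by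
    have h0 : t ≠ 0 := ht'.ne'
    field_simp
    nlinarith [hb]
  rwa [this] at h
noncomputable def Y1 : ℝ → ℝ := fun s => ((-4) : ℝ) * (Fi 0 s ^ 3 * (Fi 1 s ^ 1 * s⁻¹ ^ 0))

noncomputable def Y2 : ℝ → ℝ := fun s => (12 : ℝ) * (Fi 0 s ^ 2 * (Fi 1 s ^ 2 * s⁻¹ ^ 0)) + (4 : ℝ) * (Fi 0 s ^ 3 * (Fi 1 s ^ 1 * s⁻¹ ^ 1)) + (4 : ℝ) * (Fi 0 s ^ 4 * (Fi 1 s ^ 0 * s⁻¹ ^ 0))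

noncomputable def Y3 : ℝ → ℝ := fun s => ((-24) : ℝ) * (Fi 0 s ^ 1 * (Fi 1 s ^ 3 * s⁻¹ ^ 0)) + ((-36) : ℝ) * (Fi 0 s ^ 2 * (Fi 1 s ^ 2 * s⁻¹ ^ 1)) + ((-8) : ℝ) * (Fi 0 s ^ 3 * (Fi 1 s ^ 1 * s⁻¹ ^ 2)) + ((-40) : ℝ) * (Fi 0 s ^ 3 * (Fi 1 s ^ 1 * s⁻¹ ^ 0)) + ((-4) : ℝ) * (Fi 0 s ^ 4 * (Fi 1 s ^ 0 * s⁻¹ ^ 1))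

noncomputable def Y4 : ℝ → ℝ := fun s => (24 : ℝ) * (Fi 0 s ^ 0 * (Fi 1 s ^ 4 * s⁻¹ ^ 0)) + (144 : ℝ) * (Fi 0 s ^ 1 * (Fi 1 s ^ 3 * s⁻¹ ^ 1)) + (132 : ℝ) * (Fi 0 s ^ 2 * (Fi 1 s ^ 2 * s⁻¹ ^ 2)) + (192 : ℝ) * (Fi 0 s ^ 2 * (Fi 1 s ^ 2 * s⁻¹ ^ 0)) + (24 : ℝ) * (Fi 0 s ^ 3 * (Fi 1 s ^ 1 * s⁻¹ ^ 3)) + (128 : ℝ) * (Fi 0 s ^ 3 * (Fi 1 s ^ 1 * s⁻¹ ^ 1)) + (12 : ℝ) * (Fi 0 s ^ 4 * (Fi 1 s ^ 0 * s⁻¹ ^ 2)) + (40 : ℝ) * (Fi 0 s ^ 4 * (Fi 1 s ^ 0 * s⁻¹ ^ 0))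

noncomputable def Y5 : ℝ → ℝ := fun s => ((-240) : ℝ) * (Fi 0 s ^ 0 * (Fi 1 s ^ 4 * s⁻¹ ^ 1)) + ((-840) : ℝ) * (Fi 0 s ^ 1 * (Fi 1 s ^ 3 * s⁻¹ ^ 2)) + ((-480) : ℝ) * (Fi 0 s ^ 1 * (Fi 1 s ^ 3 * s⁻¹ ^ 0)) + ((-600) : ℝ) * (Fi 0 s ^ 2 * (Fi 1 s ^ 2 * s⁻¹ ^ 3)) + ((-1200) : ℝ) * (Fi 0 s ^ 2 * (Fi 1 s ^ 2 * s⁻¹ ^ 1)) + ((-96) : ℝ) * (Fi 0 s ^ 3 * (Fi 1 s ^ 1 * s⁻¹ ^ 4)) + ((-568) : ℝ) * (Fi 0 s ^ 3 * (Fi 1 s ^ 1 * s⁻¹ ^ 2)) + ((-544) : ℝ) * (Fi 0 s ^ 3 * (Fi 1 s ^ 1 * s⁻¹ ^ 0)) + ((-48) : ℝ) * (Fi 0 s ^ 4 * (Fi 1 s ^ 0 * s⁻¹ ^ 3)) + ((-128) : ℝ) * (Fi 0 s ^ 4 * (Fi 1 s ^ 0 * s⁻¹ ^ 1))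

lemma hasDerivAt_Y1 {t : ℝ} (ht : t ∈ Set.Ioi (0:ℝ)) : HasDerivAt Y1 (Y2 t) t := by
  have ht' : (0:ℝ) < t := ht
  have hu := hasDerivAt_Fi0 ht
  have hv := hasDerivAt_Fi1 ht
  have hinv : HasDerivAt (fun s : ℝ => s⁻¹) (-(t^2)⁻¹) t := by
    simpa using hasDerivAt_inv ht'.ne'
  have H := (((hu.pow 3).mul ((hv.pow 1).mul (hinv.pow 0))).const_mul ((-4) : ℝ))
  refine H.congr_deriv (Eq.symm ?_)
  have h0 : t ≠ 0 := ht'.ne'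
  simp only [Y2, Pi.pow_apply, Pi.mul_apply, Pi.one_apply]
  field_simp
  ring

lemma hasDerivAt_Y2 {t : ℝ} (ht : t ∈ Set.Ioi (0:ℝ)) : HasDerivAt Y2 (Y3 t) t := by
  have ht' : (0:ℝ) < t := ht
  have hu := hasDerivAt_Fi0 ht
  have hv := hasDerivAt_Fi1 ht
  have hinv : HasDerivAt (fun s : ℝ => s⁻¹) (-(t^2)⁻¹) t := by
    simpa using hasDerivAt_inv ht'.ne'
  have H := (((((hu.pow 2).mul ((hv.pow 2).mul (hinv.pow 0))).const_mul (12 : ℝ)).add (((hu.pow 3).mul ((hv.pow 1).mul (hinv.pow 1))).const_mul (4 : ℝ))).add (((hu.pow 4).mul ((hv.pow 0).mul (hinv.pow 0))).const_mul (4 : ℝ)))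
  refine H.congr_deriv (Eq.symm ?_)
  have h0 : t ≠ 0 := ht'.ne'
  simp only [Y3, Pi.pow_apply, Pi.mul_apply, Pi.one_apply]
  field_simp
  ring

lemma hasDerivAt_Y3 {t : ℝ} (ht : t ∈ Set.Ioi (0:ℝ)) : HasDerivAt Y3 (Y4 t) t := by
  have ht' : (0:ℝ) < t := ht
  have hu := hasDerivAt_Fi0 ht
  have hv := hasDerivAt_Fi1 ht
  have hinv : HasDerivAt (fun s : ℝ => s⁻¹) (-(t^2)⁻¹) t := by
    simpa using hasDerivAt_inv ht'.ne'
  have H := (((((((hu.pow 1).mul ((hv.pow 3).mul (hinv.pow 0))).const_mul ((-24) : ℝ)).add (((hu.pow 2).mul ((hv.pow 2).mul (hinv.pow 1))).const_mul ((-36) : ℝ))).add (((hu.pow 3).mul ((hv.pow 1).mul (hinv.pow 2))).const_mul ((-8) : ℝ))).add (((hu.pow 3).mul ((hv.pow 1).mul (hinv.pow 0))).const_mul ((-40) : ℝ))).add (((hu.pow 4).mul ((hv.pow 0).mul (hinv.pow 1))).const_mul ((-4) : ℝ)))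
  refine H.congr_deriv (Eq.symm ?_)
  have h0 : t ≠ 0 := ht'.ne'
  simp only [Y4, Pi.pow_apply, Pi.mul_apply, Pi.one_apply, Nat.reduceSub]
  field_simp
  ring

lemma hasDerivAt_Y4 {t : ℝ} (ht : t ∈ Set.Ioi (0:ℝ)) : HasDerivAt Y4 (Y5 t) t := by
  have ht' : (0:ℝ) < t := ht
  have hu := hasDerivAt_Fi0 ht
  have hv := hasDerivAt_Fi1 ht
  have hinv : HasDerivAt (fun s : ℝ => s⁻¹) (-(t^2)⁻¹) t := by
    simpa using hasDerivAt_inv ht'.ne'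
  have H := ((((((((((hu.pow 0).mul ((hv.pow 4).mul (hinv.pow 0))).const_mul (24 : ℝ)).add (((hu.pow 1).mul ((hv.pow 3).mul (hinv.pow 1))).const_mul (144 : ℝ))).add (((hu.pow 2).mul ((hv.pow 2).mul (hinv.pow 2))).const_mul (132 : ℝ))).add (((hu.pow 2).mul ((hv.pow 2).mul (hinv.pow 0))).const_mul (192 : ℝ))).add (((hu.pow 3).mul ((hv.pow 1).mul (hinv.pow 3))).const_mul (24 : ℝ))).add (((hu.pow 3).mul ((hv.pow 1).mul (hinv.pow 1))).const_mul (128 : ℝ))).add (((hu.pow 4).mul ((hv.pow 0).mul (hinv.pow 2))).const_mul (12 : ℝ))).add (((hu.pow 4).mul ((hv.pow 0).mul (hinv.pow 0))).const_mul (40 : ℝ)))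
  refine H.congr_deriv (Eq.symm ?_)
  have h0 : t ≠ 0 := ht'.ne'
  simp only [Y5, Pi.pow_apply, Pi.mul_apply, Pi.one_apply, Nat.reduceSub]
  field_simp
  ring


lemma K0_eq_Fi0 : K₀ = Fi 0 := by
  funext t; simp [K₀, Fi]

lemma y_eq : y = fun t => Fi 0 t ^ 4 := by
  funext t; simp [y, K0_eq_Fi0]

lemma hasDerivAt_y {t : ℝ} (ht : t ∈ Set.Ioi (0:ℝ)) : HasDerivAt y (Y1 t) t := by
  rw [y_eq]
  have hu := hasDerivAt_Fi0 ht
  have H := hu.pow 4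
  refine H.congr_deriv (Eq.symm ?_)
  simp [Y1]; ring

lemma deriv_y_eq {t : ℝ} (ht : t ∈ Set.Ioi (0:ℝ)) : deriv y t = Y1 t :=
  (hasDerivAt_y ht).deriv

lemma deriv2_y_eq {t : ℝ} (ht : t ∈ Set.Ioi (0:ℝ)) : deriv (deriv y) t = Y2 t := by
  have he : deriv y =ᶠ[nhds t] Y1 :=
    eventually_of_mem (Ioi_mem_nhds ht) fun s hs => deriv_y_eq hs
  rw [he.deriv_eq]
  exact (hasDerivAt_Y1 ht).deriv

lemma deriv3_y_eq {t : ℝ} (ht : t ∈ Set.Ioi (0:ℝ)) :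
    deriv (deriv (deriv y)) t = Y3 t := by
  have he : deriv (deriv y) =ᶠ[nhds t] Y2 :=
    eventually_of_mem (Ioi_mem_nhds ht) fun s hs => deriv2_y_eq hs
  rw [he.deriv_eq]
  exact (hasDerivAt_Y2 ht).deriv

lemma deriv4_y_eq {t : ℝ} (ht : t ∈ Set.Ioi (0:ℝ)) :
    deriv (deriv (deriv (deriv y))) t = Y4 t := by
  have he : deriv (deriv (deriv y)) =ᶠ[nhds t] Y3 :=
    eventually_of_mem (Ioi_mem_nhds ht) fun s hs => deriv3_y_eq hs
  rw [he.deriv_eq]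
  exact (hasDerivAt_Y3 ht).deriv

lemma deriv5_y_eq {t : ℝ} (ht : t ∈ Set.Ioi (0:ℝ)) :
    deriv (deriv (deriv (deriv (deriv y)))) t = Y5 t := by
  have he : deriv (deriv (deriv (deriv y))) =ᶠ[nhds t] Y4 :=
    eventually_of_mem (Ioi_mem_nhds ht) fun s hs => deriv4_y_eq hs
  rw [he.deriv_eq]
  exact (hasDerivAt_Y4 ht).deriv

theorem K0_pow_four_ode : ∀ t ∈ Set.Ioi (0:ℝ),
    t ^ 4 * iteratedDeriv 5 y t + 10 * t ^ 3 * iteratedDeriv 4 y t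
      - (20 * t ^ 4 - 25 * t ^ 2) * iteratedDeriv 3 y t
      - (120 * t ^ 3 - 15 * t) * iteratedDeriv 2 y t
      + (64 * t ^ 4 - 152 * t ^ 2 + 1) * deriv y t
      + (128 * t ^ 3 - 32 * t) * y t = 0 := by
  intro t ht
  have ht' : (0:ℝ) < t := ht
  have h0 : t ≠ 0 := ht'.ne'
  have e5 : iteratedDeriv 5 y t = Y5 t := by
    rw [show (5:ℕ) = 4+1 from rfl, iteratedDeriv_succ,
      show (4:ℕ) = 3+1 from rfl, iteratedDeriv_succ,
      show (3:ℕ) = 2+1 from rfl, iteratedDeriv_succ,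
      show (2:ℕ) = 1+1 from rfl, iteratedDeriv_succ, iteratedDeriv_one]
    exact deriv5_y_eq ht
  have e4 : iteratedDeriv 4 y t = Y4 t := by
    rw [show (4:ℕ) = 3+1 from rfl, iteratedDeriv_succ,
      show (3:ℕ) = 2+1 from rfl, iteratedDeriv_succ,
      show (2:ℕ) = 1+1 from rfl, iteratedDeriv_succ, iteratedDeriv_one]
    exact deriv4_y_eq ht
  have e3 : iteratedDeriv 3 y t = Y3 t := by
    rw [show (3:ℕ) = 2+1 from rfl, iteratedDeriv_succ,
      show (2:ℕ) = 1+1 from rfl, iteratedDeriv_succ, iteratedDeriv_one]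
    exact deriv3_y_eq ht
  have e2 : iteratedDeriv 2 y t = Y2 t := by
    rw [show (2:ℕ) = 1+1 from rfl, iteratedDeriv_succ, iteratedDeriv_one]
    exact deriv2_y_eq ht
  have e1 : deriv y t = Y1 t := deriv_y_eq ht
  have e0 : y t = Fi 0 t ^ 4 := by rw [y_eq]
  rw [e5, e4, e3, e2, e1, e0]
  simp only [Y1, Y2, Y3, Y4, Y5]
  field_simp
  ring
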